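/- For any k ≥ 2 and l ∈ ℕ with k + l even, the twisted cubic cylinder W̄_{k,l} is isomorphic (as a simple graph) to the twisted cubic cylinder W̄_{(k+l)/2, (3k−l)/2}. -/

import Mathlib

/-- One "direction" of the edges of the twisted cubic cylinder `W̄_{k,l}`:
horizontal edges, straight vertical edges and twisted edges. -/
def cylStep (k : ℕ) (l : ℤ) (p q : ℤ × ZMod k) : Prop :=
  -- horizontal edges {(n,m),(n+1,m)}
  (q.1 = p.1 + 1 ∧ q.2 = p.2) ∨
  -- straight vertical edges
  (∃ (n : ℤ) (m : ℕ), m + 2 ≤ k ∧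
    ((Even m ∧ p = (2 * n, (m : ZMod k)) ∧ q = (2 * n, ((m + 1 : ℕ) : ZMod k))) ∨
     (Odd m ∧ p = (2 * n + 1, (m : ZMod k)) ∧ q = (2 * n + 1, ((m + 1 : ℕ) : ZMod k))))) ∨
  -- twisted edges
  ((Even k ∧ ∃ n : ℤ, p = (2 * n + 1, ((k - 1 : ℕ) : ZMod k)) ∧ q = (2 * n + 1 + l, 0)) ∨
   (Odd k ∧ ∃ n : ℤ, p = (2 * n, ((k - 1 : ℕ) : ZMod k)) ∧ q = (2 * n + l, 0)))

/-- The twisted cubic cylinder `W̄_{k,l}` of height `k` and twist `l`. -/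
def twistedCylinder (k : ℕ) (l : ℤ) : SimpleGraph (ℤ × ZMod k) where
  Adj p q := p ≠ q ∧ (cylStep k l p q ∨ cylStep k l q p)
  symm := ⟨by rintro p q ⟨hne, h⟩; exact ⟨hne.symm, h.symm⟩⟩
  loopless := ⟨by rintro p ⟨hne, -⟩; exact hne rfl⟩

namespace CylProof

/-- Edges of the infinite brick-wall graph on `ℤ × ℤ` (one direction). -/
def bstep (x y : ℤ × ℤ) : Prop :=
  (y.1 = x.1 + 1 ∧ y.2 = x.2) ∨ (y.1 = x.1 ∧ y.2 = x.2 + 1 ∧ (x.1 + x.2) % 2 = 0)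

/-- Projection from the brick wall to the twisted cylinder. -/
def proj (k : ℕ) (l : ℤ) (x : ℤ × ℤ) : ℤ × ZMod k :=
  (x.1 + l * (x.2 / (k : ℤ)), (x.2 : ZMod k))

/-- The brick-wall automorphism realizing the isomorphism. -/
def FF (x : ℤ × ℤ) : ℤ × ℤ := ((3 - x.1 - 3 * x.2) / 2, (x.2 - x.1) / 2)

/-- Inverse of `FF`. -/
def FI (x : ℤ × ℤ) : ℤ × ℤ := FF (x.1 - 1, x.2 + 1)

lemma FI_FF (x : ℤ × ℤ) : FI (FF x) = x := by
  obtain ⟨a, b⟩ := x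
  simp only [FI, FF, Prod.mk.injEq]
  omega

lemma FF_FI (x : ℤ × ℤ) : FF (FI x) = x := by
  obtain ⟨a, b⟩ := x
  simp only [FI, FF, Prod.mk.injEq]
  omega

lemma bstep_FF {x y : ℤ × ℤ} (h : bstep x y) : bstep (FF y) (FF x) := by
  obtain ⟨a, b⟩ := x; obtain ⟨c, d⟩ := y
  simp only [bstep, FF] at *
  omega

lemma bstep_FI {x y : ℤ × ℤ} (h : bstep x y) : bstep (FI y) (FI x) := by
  obtain ⟨a, b⟩ := x; obtain ⟨c, d⟩ := y
  simp only [bstep, FI, FF] at *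
  omega

lemma ediv_eq {k t r b : ℤ} (hk : 0 < k) (h : k * t + r = b) (h0 : 0 ≤ r) (h1 : r < k) :
    b / k = t := by
  have hb : b = r + t * k := by linarith
  rw [hb, Int.add_mul_ediv_right _ _ hk.ne', Int.ediv_eq_zero_of_lt h0 h1, zero_add]

lemma zmod_eq (k : ℕ) {b r t : ℤ} (h : (k : ℤ) * t + r = b) :
    ((b : ℤ) : ZMod k) = ((r : ℤ) : ZMod k) := by
  have hb : b = r + (k : ℤ) * t := by linarith
  rw [hb]
  push_cast
  simp [ZMod.natCast_self]

lemma proj_small (k : ℕ) (l : ℤ) (hk : 0 < (k:ℤ)) (a b : ℤ) (h0 : 0 ≤ b) (h1 : b < k) :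
    proj k l (a, b) = (a, (b : ZMod k)) := by
  simp only [proj, Prod.mk.injEq]
  rw [Int.ediv_eq_zero_of_lt h0 h1]
  exact ⟨by ring, trivial⟩

lemma proj_lift (k : ℕ) (l : ℤ) (hk : 0 < k) (p : ℤ × ZMod k) :
    proj k l (p.1, (p.2.val : ℤ)) = p := by
  haveI : NeZero k := ⟨hk.ne'⟩
  rw [proj_small k l (by exact_mod_cast hk) _ _ (by positivity)
    (by exact_mod_cast ZMod.val_lt p.2)]
  rw [Int.cast_natCast, ZMod.natCast_rightInverse p.2]

lemma proj_translate (k : ℕ) (l : ℤ) (hk : 0 < k) (t : ℤ) (x : ℤ × ℤ) :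
    proj k l (x.1 + l * t, x.2 - (k : ℤ) * t) = proj k l x := by
  have hkz : ((k:ℕ):ℤ) ≠ 0 := by exact_mod_cast hk.ne'
  simp only [proj, Prod.mk.injEq]
  constructor
  · have h1 : x.2 - (k : ℤ) * t = x.2 + (-t) * (k : ℤ) := by ring
    rw [h1, Int.add_mul_ediv_right _ _ hkz]
    ring
  · exact zmod_eq k (t := -t) (by ring)

lemma proj_eq_exists (k : ℕ) (l : ℤ) (hk : 0 < k) {x y : ℤ × ℤ}
    (h : proj k l x = proj k l y) :
    ∃ t : ℤ, y.1 = x.1 + l * t ∧ y.2 = x.2 - (k : ℤ) * t := by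
  have hkz : ((k:ℕ):ℤ) ≠ 0 := by exact_mod_cast hk.ne'
  simp only [proj, Prod.mk.injEq] at h
  obtain ⟨h1, h2⟩ := h
  have hd : ((k:ℕ):ℤ) ∣ y.2 - x.2 := (ZMod.intCast_eq_intCast_iff _ _ _).mp h2 |>.dvd
  obtain ⟨t, ht⟩ := hd
  refine ⟨-t, ?_, by linarith⟩
  have h3 : y.2 = x.2 + t * (k : ℤ) := by linarith
  rw [h3, Int.add_mul_ediv_right _ _ hkz] at h1
  have : x.1 + l * (x.2 / k) = y.1 + l * (x.2 / k) + l * t := by linarith [h1]; 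
  linarith [this]

lemma proj_FF {k K' : ℕ} {l L' : ℤ} (hk : 0 < k) (hK' : 0 < K')
    (hK : 2 * (K' : ℤ) = (k : ℤ) + l) (hL : 2 * L' = 3 * (k : ℤ) - l)
    {x y : ℤ × ℤ} (h : proj k l x = proj k l y) :
    proj K' L' (FF x) = proj K' L' (FF y) := by
  obtain ⟨t, h1, h2⟩ := proj_eq_exists k l hk h
  have hFF : FF y = ((FF x).1 + L' * t, (FF x).2 - (K' : ℤ) * t) := by
    have e1 : 3 - y.1 - 3 * y.2 = (3 - x.1 - 3 * x.2) + (L' * t) * 2 := by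
      rw [h1, h2]; linear_combination (-t) * hL
    have e2 : y.2 - y.1 = (x.2 - x.1) + (-((K' : ℤ) * t)) * 2 := by
      rw [h1, h2]; linear_combination t * hK
    simp only [FF, Prod.mk.injEq]
    rw [e1, e2, Int.add_mul_ediv_right _ _ two_ne_zero,
      Int.add_mul_ediv_right _ _ two_ne_zero]
    exact ⟨rfl, by ring⟩
  rw [hFF, proj_translate K' L' hK' t (FF x)]

lemma proj_FI {k K' : ℕ} {l L' : ℤ} (hk : 0 < k) (hK' : 0 < K')
    (hK : 2 * (K' : ℤ) = (k : ℤ) + l) (hL : 2 * L' = 3 * (k : ℤ) - l)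
    {x y : ℤ × ℤ} (h : proj K' L' x = proj K' L' y) :
    proj k l (FI x) = proj k l (FI y) := by
  obtain ⟨t, h1, h2⟩ := proj_eq_exists K' L' hK' h
  have h3 : 3 * (K' : ℤ) - L' = 2 * l := by omega
  have h4 : (K' : ℤ) + L' = 2 * k := by omega
  have hFI : FI y = ((FI x).1 + l * t, (FI x).2 - (k : ℤ) * t) := by
    have e1 : 3 - (y.1 - 1) - 3 * (y.2 + 1) = (3 - (x.1 - 1) - 3 * (x.2 + 1)) + (l * t) * 2 := by
      rw [h1, h2]; linear_combination t * h3
    have e2 : (y.2 + 1) - (y.1 - 1) = ((x.2 + 1) - (x.1 - 1)) + (-((k : ℤ) * t)) * 2 := by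
      rw [h1, h2]; linear_combination (-t) * h4
    simp only [FI, FF, Prod.mk.injEq]
    rw [e1, e2, Int.add_mul_ediv_right _ _ two_ne_zero,
      Int.add_mul_ediv_right _ _ two_ne_zero]
    exact ⟨rfl, by ring⟩
  rw [hFI, proj_translate k l hk t (FI x)]

lemma cylStep_iff (k : ℕ) (l : ℤ) (hk : 0 < k) (hpar : (((k : ℕ) : ℤ) + l) % 2 = 0)
    (p q : ℤ × ZMod k) :
    cylStep k l p q ↔ ∃ x y : ℤ × ℤ, proj k l x = p ∧ proj k l y = q ∧ bstep x y := by
  have hkz : (0 : ℤ) < (k : ℤ) := by exact_mod_cast hk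
  constructor
  · rintro (⟨h1, h2⟩ | ⟨n, m, hm, ⟨hme, hp', hq'⟩ | ⟨hmo, hp', hq'⟩⟩ |
      ⟨hke, n, hp', hq'⟩ | ⟨hko, n, hp', hq'⟩)
    · -- horizontal
      refine ⟨(p.1, (p.2.val : ℤ)), (p.1 + 1, (p.2.val : ℤ)), proj_lift k l hk p, ?_,
        Or.inl ⟨rfl, rfl⟩⟩
      have := proj_lift k l hk (p.1 + 1, p.2)
      rw [this]
      exact Prod.ext h1.symm h2.symm
    · -- vertical, even m
      refine ⟨(2 * n, (m : ℤ)), (2 * n, (m : ℤ) + 1), ?_, ?_, Or.inr ⟨rfl, rfl, ?_⟩⟩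
      · rw [proj_small k l hkz _ _ (by positivity) (by exact_mod_cast (by omega : m < k)),
          hp']
        push_cast
        rfl
      · rw [show (m : ℤ) + 1 = ((m + 1 : ℕ) : ℤ) by push_cast; ring,
          proj_small k l hkz _ _ (by positivity) (by exact_mod_cast (by omega : m + 1 < k)),
          hq']
        push_cast
        rfl
      · obtain ⟨c, hc⟩ := hme; omega
    · -- vertical, odd m
      refine ⟨(2 * n + 1, (m : ℤ)), (2 * n + 1, (m : ℤ) + 1), ?_, ?_, Or.inr ⟨rfl, rfl, ?_⟩⟩
      · rw [proj_small k l hkz _ _ (by positivity) (by exact_mod_cast (by omega : m < k)),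
          hp']
        push_cast
        rfl
      · rw [show (m : ℤ) + 1 = ((m + 1 : ℕ) : ℤ) by push_cast; ring,
          proj_small k l hkz _ _ (by positivity) (by exact_mod_cast (by omega : m + 1 < k)),
          hq']
        push_cast
        rfl
      · obtain ⟨c, hc⟩ := hmo; omega
    · -- twisted, even k
      refine ⟨(2 * n + 1, (k : ℤ) - 1), (2 * n + 1, (k : ℤ)), ?_, ?_, Or.inr ⟨rfl, by ring, ?_⟩⟩
      · rw [proj_small k l hkz _ _ (by omega) (by omega), hp',
          show ((k : ℤ) - 1) = ((k - 1 : ℕ) : ℤ) by omega]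
        push_cast
        rfl
      · rw [hq']
        simp only [proj, Prod.mk.injEq]
        rw [Int.ediv_self hkz.ne']
        constructor
        · ring
        · push_cast; simp
      · obtain ⟨c, hc⟩ := hke; omega
    · -- twisted, odd k
      refine ⟨(2 * n, (k : ℤ) - 1), (2 * n, (k : ℤ)), ?_, ?_, Or.inr ⟨rfl, by ring, ?_⟩⟩
      · rw [proj_small k l hkz _ _ (by omega) (by omega), hp',
          show ((k : ℤ) - 1) = ((k - 1 : ℕ) : ℤ) by omega]
        push_cast
        rfl
      · rw [hq']
        simp only [proj, Prod.mk.injEq]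
        rw [Int.ediv_self hkz.ne']
        constructor
        · ring
        · push_cast; simp
      · obtain ⟨c, hc⟩ := hko; omega
  · rintro ⟨⟨a, b⟩, ⟨a', b'⟩, hx, hy, hs⟩
    simp only [bstep] at hs
    set t := b / (k : ℤ) with htdef
    set r := b % (k : ℤ) with hrdef
    have hb : (k : ℤ) * t + r = b := Int.mul_ediv_add_emod b (k : ℤ)
    have hr0 : 0 ≤ r := Int.emod_nonneg b hkz.ne'
    have hrk : r < (k : ℤ) := Int.emod_lt_of_pos b hkz
    have hx' : p = (a + l * t, ((b : ℤ) : ZMod k)) := by rw [← hx]; rfl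
    rcases hs with ⟨h1, h2⟩ | ⟨h1, h2, h3⟩
    · -- horizontal
      refine Or.inl ⟨?_, ?_⟩
      · rw [hx', ← hy]
        simp only [proj, h1, h2]
        ring
      · rw [hx', ← hy]
        simp only [proj, h1, h2]
    · -- vertical lift
      have hpar2 : (a + l * t) % 2 = r % 2 := by
        obtain ⟨c, hc⟩ : Even (((k : ℤ) + l) * t) := (Int.even_iff.mpr hpar).mul_right t
        have hc' : (k : ℤ) * t + l * t = c + c := by linear_combination hc
        have key : ∀ A B : ℤ, A + B = c + c → A + r = b → (a + B) % 2 = r % 2 := by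
          intro A B e1 e2; omega
        exact key _ _ hc' hb
      by_cases hcase : r + 1 < (k : ℤ)
      · -- interior vertical edge
        have hq' : q = (a + l * t, ((b + 1 : ℤ) : ZMod k)) := by
          rw [← hy]
          simp only [proj, h1, h2, Prod.mk.injEq]
          rw [ediv_eq hkz (t := t) (r := r + 1) (by linarith) (by linarith) hcase]
          exact ⟨rfl, trivial⟩
        refine Or.inr (Or.inl ?_)
        have hcast1 : ((r.toNat : ℕ) : ZMod k) = ((b : ℤ) : ZMod k) := by
          rw [(zmod_eq k hb : ((b : ℤ) : ZMod k) = ((r : ℤ) : ZMod k))]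
          rw [show ((r.toNat : ℕ) : ZMod k) = (((r.toNat : ℕ) : ℤ) : ZMod k) by push_cast; rfl]
          rw [Int.toNat_of_nonneg hr0]
        have hcast2 : ((r.toNat + 1 : ℕ) : ZMod k) = ((b + 1 : ℤ) : ZMod k) := by
          rw [(zmod_eq k (t := t) (r := r + 1) (by linarith) : ((b + 1 : ℤ) : ZMod k) = ((r + 1 : ℤ) : ZMod k))]
          rw [show ((r.toNat + 1 : ℕ) : ZMod k) = (((r.toNat + 1 : ℕ) : ℤ) : ZMod k) by push_cast; rfl]
          congr 1
          omega
        rcases Int.emod_two_eq_zero_or_one r with hre | hre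
        · -- even level
          obtain ⟨n, hn⟩ : ∃ n : ℤ, a + l * t = 2 * n := ⟨(a + l * t) / 2, by omega⟩
          refine ⟨n, r.toNat, by omega, Or.inl ⟨by rw [Nat.even_iff]; omega, ?_, ?_⟩⟩
          · rw [hx', hcast1, hn]
          · rw [hq', hcast2, hn]
        · -- odd level
          obtain ⟨n, hn⟩ : ∃ n : ℤ, a + l * t = 2 * n + 1 := ⟨(a + l * t - 1) / 2, by omega⟩
          refine ⟨n, r.toNat, by omega, Or.inr ⟨by rw [Nat.odd_iff]; omega, ?_, ?_⟩⟩
          · rw [hx', hcast1, hn]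
          · rw [hq', hcast2, hn]
      · -- twisted edge
        have hrk1 : r + 1 = (k : ℤ) := by omega
        have hq' : q = (a + l * t + l, (0 : ZMod k)) := by
          rw [← hy]
          simp only [proj, h1, h2, Prod.mk.injEq]
          rw [ediv_eq hkz (t := t + 1) (r := 0) (by linear_combination hb - hrk1) le_rfl hkz]
          constructor
          · ring
          · rw [(zmod_eq k (t := t + 1) (r := 0) (by linear_combination hb - hrk1) :
              ((b + 1 : ℤ) : ZMod k) = ((0 : ℤ) : ZMod k))]
            exact Int.cast_zero
        have hcast3 : ((k - 1 : ℕ) : ZMod k) = ((b : ℤ) : ZMod k) := by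
          rw [(zmod_eq k hb : ((b : ℤ) : ZMod k) = ((r : ℤ) : ZMod k))]
          rw [show ((k - 1 : ℕ) : ZMod k) = (((k - 1 : ℕ) : ℤ) : ZMod k) by push_cast; rfl]
          congr 1
          omega
        refine Or.inr (Or.inr ?_)
        rcases Nat.even_or_odd k with hke | hko
        · -- k even
          have hre : r % 2 = 1 := by
            have := Nat.even_iff.mp hke
            omega
          obtain ⟨n, hn⟩ : ∃ n : ℤ, a + l * t = 2 * n + 1 := ⟨(a + l * t - 1) / 2, by omega⟩
          refine Or.inl ⟨hke, n, ?_, ?_⟩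
          · rw [hx', hcast3, hn]
          · rw [hq', hn]
        · -- k odd
          have hre : r % 2 = 0 := by
            have := Nat.odd_iff.mp hko
            omega
          obtain ⟨n, hn⟩ : ∃ n : ℤ, a + l * t = 2 * n := ⟨(a + l * t) / 2, by omega⟩
          refine Or.inr ⟨hko, n, ?_, ?_⟩
          · rw [hx', hcast3, hn]
          · rw [hq', hn]


end CylProof

theorem cylinder_isomorphism (k l : ℕ) (hk : 2 ≤ k) (hkl : Even (k + l)) :
    Nonempty (twistedCylinder k (l : ℤ) ≃g
      twistedCylinder ((k + l) / 2) ((3 * (k : ℤ) - l) / 2)) := by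
  classical
  set K' : ℕ := (k + l) / 2 with hK'def
  set L' : ℤ := (3 * (k : ℤ) - l) / 2 with hL'def
  have h1 : k + l = 2 * K' := by
    obtain ⟨c, hc⟩ := hkl
    omega
  have hK : 2 * (K' : ℤ) = (k : ℤ) + (l : ℤ) := by exact_mod_cast h1.symm
  have hL : 2 * L' = 3 * (k : ℤ) - (l : ℤ) := by
    rw [hL'def]
    omega
  have hk0 : 0 < k := by omega
  have hK'0 : 0 < K' := by omega
  have hpar : (((k : ℕ) : ℤ) + (l : ℤ)) % 2 = 0 := by omega
  have hpar' : (((K' : ℕ) : ℤ) + L') % 2 = 0 := by omega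
  set G : ℤ × ZMod k → ℤ × ZMod K' :=
    fun p => CylProof.proj K' L' (CylProof.FF (p.1, (p.2.val : ℤ))) with hGdef
  set G' : ℤ × ZMod K' → ℤ × ZMod k :=
    fun p => CylProof.proj k (l : ℤ) (CylProof.FI (p.1, (p.2.val : ℤ))) with hG'def
  have lg : ∀ p, G' (G p) = p := by
    intro p
    have h0 : CylProof.proj K' L' ((G p).1, ((G p).2.val : ℤ)) =
        CylProof.proj K' L' (CylProof.FF (p.1, (p.2.val : ℤ))) := by
      rw [CylProof.proj_lift K' L' hK'0 (G p)]
    have h2 := CylProof.proj_FI hk0 hK'0 hK hL h0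
    rw [CylProof.FI_FF, CylProof.proj_lift k (l : ℤ) hk0 p] at h2
    exact h2
  have rg : ∀ p, G (G' p) = p := by
    intro p
    have h0 : CylProof.proj k (l : ℤ) ((G' p).1, ((G' p).2.val : ℤ)) =
        CylProof.proj k (l : ℤ) (CylProof.FI (p.1, (p.2.val : ℤ))) := by
      rw [CylProof.proj_lift k (l : ℤ) hk0 (G' p)]
    have h2 := CylProof.proj_FF hk0 hK'0 hK hL h0
    rw [CylProof.FF_FI, CylProof.proj_lift K' L' hK'0 p] at h2
    exact h2
  have hom1 : ∀ p q, cylStep k (l : ℤ) p q → cylStep K' L' (G q) (G p) := by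
    intro p q h
    obtain ⟨x, y, hx, hy, hs⟩ := (CylProof.cylStep_iff k (l : ℤ) hk0 hpar p q).mp h
    refine (CylProof.cylStep_iff K' L' hK'0 hpar' (G q) (G p)).mpr
      ⟨CylProof.FF y, CylProof.FF x, ?_, ?_, CylProof.bstep_FF hs⟩
    · refine CylProof.proj_FF hk0 hK'0 hK hL ?_
      rw [hy, CylProof.proj_lift k (l : ℤ) hk0 q]
    · refine CylProof.proj_FF hk0 hK'0 hK hL ?_
      rw [hx, CylProof.proj_lift k (l : ℤ) hk0 p]
  have hom2 : ∀ p q, cylStep K' L' p q → cylStep k (l : ℤ) (G' q) (G' p) := by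
    intro p q h
    obtain ⟨x, y, hx, hy, hs⟩ := (CylProof.cylStep_iff K' L' hK'0 hpar' p q).mp h
    refine (CylProof.cylStep_iff k (l : ℤ) hk0 hpar (G' q) (G' p)).mpr
      ⟨CylProof.FI y, CylProof.FI x, ?_, ?_, CylProof.bstep_FI hs⟩
    · refine CylProof.proj_FI hk0 hK'0 hK hL ?_
      rw [hy, CylProof.proj_lift K' L' hK'0 q]
    · refine CylProof.proj_FI hk0 hK'0 hK hL ?_
      rw [hx, CylProof.proj_lift K' L' hK'0 p]
  refine ⟨⟨⟨G, G', lg, rg⟩, ?_⟩⟩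
  intro a b
  simp only [Equiv.coe_fn_mk, twistedCylinder, ne_eq]
  constructor
  · rintro ⟨hne, h | h⟩
    · refine ⟨fun he => hne (by rw [he]), Or.inr ?_⟩
      have h2 := hom2 _ _ h
      rwa [lg, lg] at h2
    · refine ⟨fun he => hne (by rw [he]), Or.inl ?_⟩
      have h2 := hom2 _ _ h
      rwa [lg, lg] at h2
  · rintro ⟨hne, h | h⟩
    · refine ⟨fun he => hne ?_, Or.inr (hom1 _ _ h)⟩
      have := congrArg G' he
      rwa [lg, lg] at this
    · refine ⟨fun he => hne ?_, Or.inl (hom1 _ _ h)⟩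
      have := congrArg G' he
      rwa [lg, lg] at this
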